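/- Let (X,b) be a locally finite weighted graph, F = (F_x)_{x∈X} a family of finite-dimensional complex inner product spaces, Φ a unitary connection on F with Φ_{yx} = Φ_{xy}^{-1}, and W a family of self-adjoint maps W(x) : F_x → F_x. Then the magnetic Schrödinger operator M : Γ(X;F) → Γ(X;F) is continuous (for the product topology), maps Γ_c(X;F) into Γ_c(X;F), satisfies the symmetry (φ, Mψ) = (Mφ, ψ) for all φ,ψ ∈ Γ_c(X;F) where (φ,ψ) = ∑_{x∈X} ⟨φ(x),ψ(x)⟩_x, and M is surjective if and only if the restriction of M to Γ_c(X;F) is injective. -/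

import Mathlib

open Function

lemma inner_rsmul' {E : Type*} [NormedAddCommGroup E] [InnerProductSpace ℂ E]
    (r : ℝ) (u v : E) : (inner ℂ u (r • v) : ℂ) = (r : ℂ) * inner ℂ u v := by
  rw [← Complex.coe_smul, inner_smul_right]

lemma rsmul_inner' {E : Type*} [NormedAddCommGroup E] [InnerProductSpace ℂ E]
    (r : ℝ) (u v : E) : (inner ℂ (r • u) v : ℂ) = (r : ℂ) * inner ℂ u v := by
  rw [← Complex.coe_smul, inner_smul_left]
  simp

section MagAux

variable {X : Type*} (b : X → X → ℝ)
variable {F : X → Type*} [∀ x, NormedAddCommGroup (F x)] [∀ x, InnerProductSpace ℂ (F x)]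
  [∀ x, FiniteDimensional ℂ (F x)]
variable (Φ : ∀ x y : X, F y ≃ₗᵢ[ℂ] F x) (W : ∀ x, F x →ₗ[ℂ] F x)

/-- The magnetic Schrödinger operator. -/
noncomputable def Mop (f : ∀ x, F x) (x : X) : F x :=
  (∑ᶠ y, b x y • (f x - Φ x y (f y))) + W x (f x)

variable (hlf : ∀ x, {y | b x y ≠ 0}.Finite)
include hlf

lemma Mop_eq_sum (f : ∀ x, F x) (x : X) :
    Mop b Φ W f x = (∑ y ∈ (hlf x).toFinset, b x y • (f x - Φ x y (f y))) + W x (f x) := by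
  unfold Mop
  congr 1
  apply finsum_eq_finset_sum_of_support_subset
  intro y hy
  simp only [Set.Finite.coe_toFinset, Set.mem_setOf_eq]
  intro h
  apply hy
  simp [h]

lemma Mop_add (f g : ∀ x, F x) : Mop b Φ W (f + g) = Mop b Φ W f + Mop b Φ W g := by
  funext x
  simp only [Pi.add_apply, Mop_eq_sum b Φ W hlf, map_add]
  have h : ∀ y ∈ (hlf x).toFinset, b x y • (f x + g x - (Φ x y (f y) + Φ x y (g y)))
      = b x y • (f x - Φ x y (f y)) + b x y • (g x - Φ x y (g y)) := by
    intro y _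
    rw [← smul_add]
    congr 1
    abel
  rw [Finset.sum_congr rfl h, Finset.sum_add_distrib]
  abel

lemma Mop_smul (c : ℂ) (f : ∀ x, F x) : Mop b Φ W (c • f) = c • Mop b Φ W f := by
  funext x
  simp only [Pi.smul_apply, Mop_eq_sum b Φ W hlf, map_smul, smul_add, Finset.smul_sum]
  congr 1
  apply Finset.sum_congr rfl
  intro y _
  rw [← smul_sub, smul_comm]

lemma Mop_vanish (φ : ∀ x, F x) (x : X) (h1 : φ x = 0)
    (h2 : ∀ y, φ y ≠ 0 → b x y = 0) : Mop b Φ W φ x = 0 := by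
  rw [Mop_eq_sum b Φ W hlf, h1, map_zero, add_zero]
  apply Finset.sum_eq_zero
  intro y _
  by_cases hy : φ y = 0
  · simp [h1, hy]
  · rw [h2 y hy]
    simp

lemma Mop_support (hsym : ∀ x y, b x y = b y x) (φ : ∀ x, F x)
    (hφ : {x | φ x ≠ 0}.Finite) : {x | Mop b Φ W φ x ≠ 0}.Finite := by
  apply Set.Finite.subset (hφ.union (hφ.biUnion (fun y _ => hlf y)))
  intro x hx
  simp only [Set.mem_setOf_eq] at hx
  rw [Set.mem_union]
  by_contra hc
  push_neg at hc
  obtain ⟨h1, h2⟩ := hc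
  simp only [Set.mem_setOf_eq, not_not] at h1
  apply hx
  apply Mop_vanish b Φ W hlf φ x h1
  intro y hy
  rw [hsym]
  by_contra hb
  exact h2 (Set.mem_biUnion hy hb)

variable (hΦ : ∀ x y : X, (Φ x y).symm = Φ y x)
include hΦ

omit hlf in
lemma inner_flip_iso {x y : X} (u : F x) (v : F y) :
    (inner ℂ (Φ y x u) v : ℂ) = inner ℂ u (Φ x y v) := by
  have h1 : (inner ℂ (Φ y x u) v : ℂ) = inner ℂ (Φ x y (Φ y x u)) (Φ x y v) :=
    ((Φ x y).inner_map_map _ _).symm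
  rw [h1, ← hΦ x y]
  simp

variable (hW : ∀ x, ∀ u v : F x, (inner ℂ (W x u) v : ℂ) = inner ℂ u (W x v))
variable (hsym : ∀ x y, b x y = b y x)
include hW hsym

/-- Symmetry of the magnetic Schrödinger operator against a finitely supported section. -/
lemma Mop_sym (φ f : ∀ x, F x) (hφ : {x | φ x ≠ 0}.Finite) :
    ∑ᶠ x, (inner ℂ (φ x) (Mop b Φ W f x) : ℂ) = ∑ᶠ x, (inner ℂ (Mop b Φ W φ x) (f x) : ℂ) := by
  classical
  set A : Finset X := hφ.toFinset with hA
  set C : Finset X := A ∪ A.biUnion (fun a => (hlf a).toFinset) with hC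
  have hAC : A ⊆ C := Finset.subset_union_left
  have hNC : ∀ x ∈ A, (hlf x).toFinset ⊆ C := by
    intro x hx y hy
    exact Finset.mem_union_right _ (Finset.mem_biUnion.2 ⟨x, hx, hy⟩)
  have hφA : ∀ x, x ∉ A → φ x = 0 := by
    intro x hx
    by_contra h
    exact hx (hφ.mem_toFinset.2 h)
  have hMC : ∀ x, x ∉ C → Mop b Φ W φ x = 0 := by
    intro x hx
    apply Mop_vanish b Φ W hlf φ x (hφA x (fun h => hx (hAC h)))
    intro y hy
    rw [hsym]
    by_contra hb
    exact hx (hNC y (hφ.mem_toFinset.2 hy) ((hlf y).mem_toFinset.2 hb))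
  have hL : ∑ᶠ x, (inner ℂ (φ x) (Mop b Φ W f x) : ℂ)
      = ∑ x ∈ C, (inner ℂ (φ x) (Mop b Φ W f x) : ℂ) := by
    apply finsum_eq_finset_sum_of_support_subset
    intro x hx
    by_contra h
    exact hx (by simp [hφA x (fun h' => h (hAC h'))])
  have hR : ∑ᶠ x, (inner ℂ (Mop b Φ W φ x) (f x) : ℂ)
      = ∑ x ∈ C, (inner ℂ (Mop b Φ W φ x) (f x) : ℂ) := by
    apply finsum_eq_finset_sum_of_support_subset
    intro x hx
    by_contra h
    exact hx (by simp [hMC x h])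
  rw [hL, hR]
  have expand_left : ∀ x, (inner ℂ (φ x) (Mop b Φ W f x) : ℂ)
      = (∑ y ∈ (hlf x).toFinset, ((b x y : ℂ) * inner ℂ (φ x) (f x)
          - (b x y : ℂ) * inner ℂ (φ x) (Φ x y (f y)))) + inner ℂ (φ x) (W x (f x)) := by
    intro x
    rw [Mop_eq_sum b Φ W hlf, inner_add_right, inner_sum]
    congr 1
    apply Finset.sum_congr rfl
    intro y _
    rw [inner_rsmul', inner_sub_right, mul_sub]
  have expand_right : ∀ x, (inner ℂ (Mop b Φ W φ x) (f x) : ℂ)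
      = (∑ y ∈ (hlf x).toFinset, ((b x y : ℂ) * inner ℂ (φ x) (f x)
          - (b x y : ℂ) * inner ℂ (Φ x y (φ y)) (f x))) + inner ℂ (W x (φ x)) (f x) := by
    intro x
    rw [Mop_eq_sum b Φ W hlf, inner_add_left, sum_inner]
    congr 1
    apply Finset.sum_congr rfl
    intro y _
    rw [rsmul_inner', inner_sub_left, mul_sub]
  simp only [expand_left, expand_right]
  rw [Finset.sum_add_distrib, Finset.sum_add_distrib]
  congr 1
  · -- the b-part
    simp only [Finset.sum_sub_distrib]
    congr 1
    -- the cross terms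
    have stepL : ∀ x ∈ C, ∑ y ∈ (hlf x).toFinset, (b x y : ℂ) * inner ℂ (φ x) (Φ x y (f y))
        = ∑ y ∈ C, (b x y : ℂ) * inner ℂ (φ x) (Φ x y (f y)) := by
      intro x _
      by_cases hxA : x ∈ A
      · apply Finset.sum_subset (hNC x hxA)
        intro y _ hy
        have hb : b x y = 0 := not_not.mp (fun h => hy ((hlf x).mem_toFinset.2 h))
        simp [hb]
      · simp [hφA x hxA]
    have stepR : ∀ x ∈ C, ∑ y ∈ (hlf x).toFinset, (b x y : ℂ) * inner ℂ (Φ x y (φ y)) (f x)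
        = ∑ y ∈ C, (b x y : ℂ) * inner ℂ (Φ x y (φ y)) (f x) := by
      intro x _
      have e1 : ∑ y ∈ (hlf x).toFinset, (b x y : ℂ) * inner ℂ (Φ x y (φ y)) (f x)
          = ∑ y ∈ (hlf x).toFinset ∪ C, (b x y : ℂ) * inner ℂ (Φ x y (φ y)) (f x) := by
        apply Finset.sum_subset Finset.subset_union_left
        intro y _ hy
        have hb : b x y = 0 := not_not.mp (fun h => hy ((hlf x).mem_toFinset.2 h))
        simp [hb]
      have e2 : ∑ y ∈ C, (b x y : ℂ) * inner ℂ (Φ x y (φ y)) (f x)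
          = ∑ y ∈ (hlf x).toFinset ∪ C, (b x y : ℂ) * inner ℂ (Φ x y (φ y)) (f x) := by
        apply Finset.sum_subset Finset.subset_union_right
        intro y _ hy
        have h0 : φ y = 0 := hφA y (fun h => hy (hAC h))
        simp [h0]
      rw [e1, e2]
    rw [Finset.sum_congr rfl stepL, Finset.sum_congr rfl stepR]
    conv_rhs => rw [Finset.sum_comm]
    apply Finset.sum_congr rfl
    intro x _
    apply Finset.sum_congr rfl
    intro y _
    rw [hsym y x, inner_flip_iso Φ hΦ]
  · -- the W-part
    apply Finset.sum_congr rfl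
    intro x _
    rw [hW]

end MagAux

section MagDual

variable {X : Type*} (b : X → X → ℝ)
variable {F : X → Type*} [∀ x, NormedAddCommGroup (F x)] [∀ x, InnerProductSpace ℂ (F x)]
  [∀ x, FiniteDimensional ℂ (F x)]
variable (Φ : ∀ x y : X, F y ≃ₗᵢ[ℂ] F x) (W : ∀ x, F x →ₗ[ℂ] F x)
variable (hlf : ∀ x, {y | b x y ≠ 0}.Finite)
variable (hΦ : ∀ x y : X, (Φ x y).symm = Φ y x)
variable (hW : ∀ x, ∀ u v : F x, (inner ℂ (W x u) v : ℂ) = inner ℂ u (W x v))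
variable (hsym : ∀ x y, b x y = b y x)

variable (F) in
/-- The submodule of finitely supported sections. -/
noncomputable def suppSub : Submodule ℂ (∀ x, F x) where
  carrier := {f | {x | f x ≠ 0}.Finite}
  add_mem' := by
    intro f g hf hg
    apply Set.Finite.subset (hf.union hg)
    intro x hx
    simp only [Set.mem_setOf_eq, Pi.add_apply] at hx
    rw [Set.mem_union]
    by_contra hc
    push_neg at hc
    simp only [Set.mem_setOf_eq, not_not] at hc
    exact hx (by rw [hc.1, hc.2, add_zero])
  zero_mem' := by simp
  smul_mem' := by
    intro c f hf
    apply Set.Finite.subset hf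
    intro x hx
    simp only [Set.mem_setOf_eq, Pi.smul_apply] at hx ⊢
    intro h
    exact hx (by rw [h, smul_zero])

lemma mem_suppSub (f : ∀ x, F x) : f ∈ suppSub F ↔ {x | f x ≠ 0}.Finite := Iff.rfl

/-- `Mop` as a linear map. -/
noncomputable def MopL : (∀ x, F x) →ₗ[ℂ] (∀ x, F x) where
  toFun := Mop b Φ W
  map_add' := Mop_add b Φ W hlf
  map_smul' := Mop_smul b Φ W hlf

/-- `Mop` restricted to finitely supported sections. -/
noncomputable def MopC : suppSub F →ₗ[ℂ] suppSub F :=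
  (MopL b Φ W hlf).restrict (fun f hf => Mop_support b Φ W hlf hsym f hf)

lemma MopC_coe (φ : suppSub F) :
    ((MopC b Φ W hlf hsym φ : suppSub F) : ∀ x, F x) = Mop b Φ W (φ : ∀ x, F x) := rfl

lemma finsum_inner_eq_sum (f g : ∀ x, F x) (S : Finset X) (hS : ∀ x, g x ≠ 0 → x ∈ S) :
    ∑ᶠ x, (inner ℂ (f x) (g x) : ℂ) = ∑ x ∈ S, (inner ℂ (f x) (g x) : ℂ) := by
  apply finsum_eq_finset_sum_of_support_subset
  intro x hx
  apply hS
  intro h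
  exact hx (by simp [h])

/-- The pairing map into the dual of finitely supported sections. -/
noncomputable def Lam (f : ∀ x, F x) : Module.Dual ℂ (suppSub F) where
  toFun φ := ∑ᶠ x, (inner ℂ (f x) ((φ : ∀ x, F x) x) : ℂ)
  map_add' := by
    intro φ ψ
    classical
    have hφ : {x | (φ : ∀ x, F x) x ≠ 0}.Finite := φ.2
    have hψ : {x | (ψ : ∀ x, F x) x ≠ 0}.Finite := ψ.2
    set S := (hφ.union hψ).toFinset with hSdef
    have m1 : ∀ x, ((φ + ψ : suppSub F) : ∀ x, F x) x ≠ 0 → x ∈ S := by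
      intro x hx
      simp only [hSdef, Set.Finite.mem_toFinset, Set.mem_union, Set.mem_setOf_eq]
      by_contra hc
      push_neg at hc
      exact hx (by simp [hc.1, hc.2])
    have m2 : ∀ x, ((φ : ∀ x, F x)) x ≠ 0 → x ∈ S := by
      intro x hx
      simp only [hSdef, Set.Finite.mem_toFinset, Set.mem_union, Set.mem_setOf_eq]
      exact Or.inl hx
    have m3 : ∀ x, ((ψ : ∀ x, F x)) x ≠ 0 → x ∈ S := by
      intro x hx
      simp only [hSdef, Set.Finite.mem_toFinset, Set.mem_union, Set.mem_setOf_eq]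
      exact Or.inr hx
    rw [finsum_inner_eq_sum f _ S m1, finsum_inner_eq_sum f _ S m2,
      finsum_inner_eq_sum f _ S m3, ← Finset.sum_add_distrib]
    apply Finset.sum_congr rfl
    intro x _
    simp only [Submodule.coe_add, Pi.add_apply, inner_add_right]
  map_smul' := by
    intro c φ
    classical
    have hφ : {x | (φ : ∀ x, F x) x ≠ 0}.Finite := φ.2
    set S := hφ.toFinset with hSdef
    have m1 : ∀ x, ((c • φ : suppSub F) : ∀ x, F x) x ≠ 0 → x ∈ S := by
      intro x hx
      simp only [hSdef, Set.Finite.mem_toFinset, Set.mem_setOf_eq]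
      intro h
      exact hx (by simp [h])
    have m2 : ∀ x, ((φ : ∀ x, F x)) x ≠ 0 → x ∈ S := by
      intro x hx
      simpa only [hSdef, Set.Finite.mem_toFinset, Set.mem_setOf_eq] using hx
    rw [finsum_inner_eq_sum f _ S m1, finsum_inner_eq_sum f _ S m2]
    rw [RingHom.id_apply, smul_eq_mul, Finset.mul_sum]
    apply Finset.sum_congr rfl
    intro x _
    simp only [Submodule.coe_smul, Pi.smul_apply, inner_smul_right]

lemma Lam_apply (f : ∀ x, F x) (φ : suppSub F) :
    Lam f φ = ∑ᶠ x, (inner ℂ (f x) ((φ : ∀ x, F x) x) : ℂ) := rfl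

lemma single_mem_suppSub [DecidableEq X] (x : X) (v : F x) :
    (Pi.single x v : ∀ y, F y) ∈ suppSub F := by
  rw [mem_suppSub]
  apply Set.Finite.subset (Set.finite_singleton x)
  intro z hz
  simp only [Set.mem_setOf_eq] at hz
  rw [Set.mem_singleton_iff]
  by_contra hzx
  exact hz (Pi.single_eq_of_ne hzx v)

lemma finsum_inner_single [DecidableEq X] (f : ∀ x, F x) (x : X) (v : F x) :
    ∑ᶠ z, (inner ℂ (f z) ((Pi.single x v : ∀ y, F y) z) : ℂ) = inner ℂ (f x) v := by
  rw [finsum_eq_single _ x]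
  · simp
  · intro z hz
    rw [Pi.single_eq_of_ne hz]
    simp

lemma Lam_injective : Function.Injective (Lam (X := X) (F := F)) := by
  classical
  intro f g h
  funext x
  apply ext_inner_right ℂ
  intro v
  have h2 := congrFun (congrArg (fun (T : Module.Dual ℂ (suppSub F)) => T.toFun) h)
    ⟨Pi.single x v, single_mem_suppSub x v⟩
  simpa only [Lam, finsum_inner_single] using h2

lemma Lam_surjective : Function.Surjective (Lam (X := X) (F := F)) := by
  classical
  intro lam
  set J : ∀ x, F x →ₗ[ℂ] suppSub F := fun x =>
    LinearMap.codRestrict _ (LinearMap.single ℂ F x) (fun v => single_mem_suppSub x v) with hJ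
  set f : ∀ x, F x := fun x =>
    (InnerProductSpace.toDual ℂ (F x)).symm (LinearMap.toContinuousLinearMap (lam ∘ₗ J x))
    with hf
  refine ⟨f, ?_⟩
  apply LinearMap.ext
  intro φ
  have hkey : ∀ (x : X) (v : F x), (inner ℂ (f x) v : ℂ) = lam (J x v) := by
    intro x v
    rw [hf]
    rw [InnerProductSpace.toDual_symm_apply]
    rfl
  have hφ : {x | (φ : ∀ x, F x) x ≠ 0}.Finite := φ.2
  set S := hφ.toFinset with hSdef
  have m2 : ∀ x, ((φ : ∀ x, F x)) x ≠ 0 → x ∈ S := by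
    intro x hx
    simpa only [hSdef, Set.Finite.mem_toFinset, Set.mem_setOf_eq] using hx
  rw [Lam_apply, finsum_inner_eq_sum f _ S m2]
  have step : ∀ x ∈ S, (inner ℂ (f x) ((φ : ∀ x, F x) x) : ℂ) = lam (J x ((φ : ∀ x, F x) x)) :=
    fun x _ => hkey x _
  rw [Finset.sum_congr rfl step, ← map_sum lam]
  congr 1
  apply Subtype.ext
  have hcoe : ((∑ x ∈ S, J x ((φ : ∀ x, F x) x) : suppSub F) : ∀ z, F z)
      = ∑ x ∈ S, (Pi.single x ((φ : ∀ x, F x) x) : ∀ z, F z) := by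
    refine (map_sum ((suppSub F).subtype) (fun x => J x ((φ : ∀ x, F x) x)) S).trans ?_
    apply Finset.sum_congr rfl
    intro x _
    rfl
  rw [hcoe]
  funext z
  rw [Finset.sum_apply]
  rw [Finset.sum_pi_single]
  by_cases hz : z ∈ S
  · simp [hz]
  · simp only [hz, if_false]
    by_contra hne
    exact hz (m2 z (fun h => hne h.symm))

lemma support_inner_left (u v : ∀ x, F x) (h : {x | u x ≠ 0}.Finite) :
    (support fun x => (inner ℂ (u x) (v x) : ℂ)).Finite := by
  apply h.subset
  intro x hx
  simp only [Set.mem_setOf_eq]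
  intro h0
  exact hx (by simp [h0])

lemma conj_finsum_inner (u v : ∀ x, F x)
    (h : (support fun x => (inner ℂ (u x) (v x) : ℂ)).Finite) :
    (starRingEnd ℂ) (∑ᶠ x, (inner ℂ (u x) (v x) : ℂ)) = ∑ᶠ x, (inner ℂ (v x) (u x) : ℂ) := by
  have h2 := AddMonoidHom.map_finsum (starRingEnd ℂ).toAddMonoidHom h
  simp only [RingHom.toAddMonoidHom_eq_coe, AddMonoidHom.coe_coe] at h2
  rw [h2]
  exact finsum_congr fun x => inner_conj_symm _ _

include hlf hΦ hW hsym in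
lemma Lam_Mop (f : ∀ x, F x) :
    Lam (Mop b Φ W f) = (MopC b Φ W hlf hsym).dualMap (Lam f) := by
  apply LinearMap.ext
  intro φ
  have hφ : {x | (φ : ∀ x, F x) x ≠ 0}.Finite := φ.2
  have hMφ : {x | Mop b Φ W (φ : ∀ x, F x) x ≠ 0}.Finite :=
    Mop_support b Φ W hlf hsym _ hφ
  have l1 : Lam (Mop b Φ W f) φ
      = ∑ᶠ x, (inner ℂ (Mop b Φ W f x) ((φ : ∀ x, F x) x) : ℂ) := rfl
  have c1 : (starRingEnd ℂ) (∑ᶠ x, (inner ℂ ((φ : ∀ x, F x) x) (Mop b Φ W f x) : ℂ))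
      = ∑ᶠ x, (inner ℂ (Mop b Φ W f x) ((φ : ∀ x, F x) x) : ℂ) :=
    conj_finsum_inner _ _ (support_inner_left _ _ hφ)
  have c2 : (starRingEnd ℂ) (∑ᶠ x, (inner ℂ (Mop b Φ W (φ : ∀ x, F x) x) (f x) : ℂ))
      = ∑ᶠ x, (inner ℂ (f x) (Mop b Φ W (φ : ∀ x, F x) x) : ℂ) :=
    conj_finsum_inner _ _ (support_inner_left _ _ hMφ)
  have rhs : (MopC b Φ W hlf hsym).dualMap (Lam f) φ
      = ∑ᶠ x, (inner ℂ (f x) (Mop b Φ W (φ : ∀ x, F x) x) : ℂ) := by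
    rfl
  rw [l1, rhs, ← c1, ← c2, Mop_sym b Φ W hlf hΦ hW hsym _ f hφ]

include hlf hΦ hW hsym in
lemma Mop_surj_of_inj (hinj : Function.Injective (MopC b Φ W hlf hsym)) :
    Function.Surjective (Mop b Φ W) := by
  intro g
  obtain ⟨μ, hμ⟩ := (LinearMap.dualMap_surjective_iff.mpr hinj) (Lam g)
  obtain ⟨f, hf⟩ := Lam_surjective μ
  refine ⟨f, Lam_injective ?_⟩
  rw [Lam_Mop b Φ W hlf hΦ hW hsym f, hf, hμ]

end MagDual

/-- **Continuity, symmetry and duality for magnetic Schrödinger operators.**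
Let `(X,b)` be a locally finite weighted graph, `F` a Hermitian vector bundle with
finite-dimensional fibers, `Φ` a unitary connection with `Φ_{yx} = Φ_{xy}⁻¹` and `W` a
self-adjoint bundle endomorphism.  Then the magnetic Schrödinger operator
`M f x = ∑_y b(x,y)(f x - Φ_{xy} f y) + W x (f x)` is continuous on `Γ(X;F)` (product
topology), maps `Γ_c(X;F)` into `Γ_c(X;F)`, is symmetric in the sense that
`(φ, Mψ) = (Mφ, ψ)` for all `φ, ψ ∈ Γ_c(X;F)`, and it is surjective if and only if its
restriction to `Γ_c(X;F)` is injective. -/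
theorem magnetic_schroedinger_dual
    {X : Type*} [Countable X]
    (b : X → X → ℝ)
    (hb0 : ∀ x, b x x = 0)
    (hbnn : ∀ x y, 0 ≤ b x y)
    (hsym : ∀ x y, b x y = b y x)
    (hlf : ∀ x, {y | b x y ≠ 0}.Finite)
    (F : X → Type*) [∀ x, NormedAddCommGroup (F x)] [∀ x, InnerProductSpace ℂ (F x)]
    [∀ x, FiniteDimensional ℂ (F x)]
    (Φ : ∀ x y : X, F y ≃ₗᵢ[ℂ] F x)
    (hΦ : ∀ x y : X, (Φ x y).symm = Φ y x)
    (W : ∀ x, F x →ₗ[ℂ] F x)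
    (hW : ∀ x, ∀ u v : F x, (inner ℂ (W x u) v : ℂ) = inner ℂ u (W x v)) :
    Continuous (fun (f : ∀ x, F x) (x : X) =>
        (∑ᶠ y, b x y • (f x - Φ x y (f y))) + W x (f x)) ∧
    (∀ φ : ∀ x, F x, {x | φ x ≠ 0}.Finite →
      {x | (∑ᶠ y, b x y • (φ x - Φ x y (φ y))) + W x (φ x) ≠ 0}.Finite) ∧
    (∀ φ ψ : ∀ x, F x, {x | φ x ≠ 0}.Finite → {x | ψ x ≠ 0}.Finite →
      ∑ᶠ x, (inner ℂ (φ x) ((∑ᶠ y, b x y • (ψ x - Φ x y (ψ y))) + W x (ψ x)) : ℂ) =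
        ∑ᶠ x, (inner ℂ ((∑ᶠ y, b x y • (φ x - Φ x y (φ y))) + W x (φ x)) (ψ x) : ℂ)) ∧
    (Function.Surjective (fun (f : ∀ x, F x) (x : X) =>
        (∑ᶠ y, b x y • (f x - Φ x y (f y))) + W x (f x)) ↔
      ∀ φ : ∀ x, F x, {x | φ x ≠ 0}.Finite →
        (∀ x, (∑ᶠ y, b x y • (φ x - Φ x y (φ y))) + W x (φ x) = 0) → φ = 0) := by
  classical
  refine ⟨?_, ?_, ?_, ?_⟩
  · -- continuity
    apply continuous_pi
    intro x
    have hrw : (fun f : ∀ x, F x => (∑ᶠ y, b x y • (f x - Φ x y (f y))) + W x (f x))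
        = fun f : ∀ x, F x =>
          (∑ y ∈ (hlf x).toFinset, b x y • (f x - Φ x y (f y))) + W x (f x) := by
      funext f
      exact Mop_eq_sum b Φ W hlf f x
    rw [hrw]
    apply Continuous.add
    · apply continuous_finset_sum
      intro y _
      exact ((continuous_apply x).sub
        ((Φ x y).continuous.comp (continuous_apply y))).const_smul (b x y)
    · exact (W x).continuous_of_finiteDimensional.comp (continuous_apply x)
  · intro φ hφ
    exact Mop_support b Φ W hlf hsym φ hφ
  · intro φ ψ hφ hψ
    exact Mop_sym b Φ W hlf hΦ hW hsym φ ψ hφ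
  · have hM : (fun (f : ∀ x, F x) (x : X) =>
        (∑ᶠ y, b x y • (f x - Φ x y (f y))) + W x (f x)) = Mop b Φ W := rfl
    rw [hM]
    constructor
    · intro hs φ hφ h0
      have h0' : ∀ x, Mop b Φ W φ x = 0 := h0
      obtain ⟨f, hf⟩ := hs φ
      have key : ∑ᶠ x, (inner ℂ (φ x) (φ x) : ℂ) = 0 := by
        calc ∑ᶠ x, (inner ℂ (φ x) (φ x) : ℂ)
            = ∑ᶠ x, (inner ℂ (φ x) (Mop b Φ W f x) : ℂ) := by rw [hf]
          _ = ∑ᶠ x, (inner ℂ (Mop b Φ W φ x) (f x) : ℂ) :=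
              Mop_sym b Φ W hlf hΦ hW hsym φ f hφ
          _ = ∑ᶠ x, (0 : ℂ) := finsum_congr (fun x => by rw [h0' x]; simp)
          _ = 0 := finsum_zero
      have hsum : ∑ x ∈ hφ.toFinset, (inner ℂ (φ x) (φ x) : ℂ) = 0 := by
        rw [← finsum_inner_eq_sum φ φ hφ.toFinset (fun x hx => hφ.mem_toFinset.2 hx)]
        exact key
      have h3 : ∀ x, (inner ℂ (φ x) (φ x) : ℂ) = ((‖φ x‖ ^ 2 : ℝ) : ℂ) := fun x => by
        rw [inner_self_eq_norm_sq_to_K]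
        norm_cast
      rw [Finset.sum_congr rfl (fun x _ => h3 x), ← Complex.ofReal_sum] at hsum
      have h4 : ∑ x ∈ hφ.toFinset, (‖φ x‖ ^ 2 : ℝ) = 0 := by exact_mod_cast hsum
      have h5 := (Finset.sum_eq_zero_iff_of_nonneg (fun x _ => sq_nonneg _)).1 h4
      funext x
      show φ x = 0
      by_cases hx : x ∈ hφ.toFinset
      · have h6 : ‖φ x‖ = 0 := by
          have := h5 x hx
          nlinarith [norm_nonneg (φ x)]
        exact norm_eq_zero.mp h6
      · by_contra hne
        exact hx (hφ.mem_toFinset.2 hne)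
    · intro hinj
      apply Mop_surj_of_inj b Φ W hlf hΦ hW hsym
      rw [injective_iff_map_eq_zero]
      intro φ h0
      have hv : (φ : ∀ x, F x) = 0 := by
        apply hinj _ φ.2
        intro x
        have h1 := congrArg (fun (ψ : suppSub F) => (ψ : ∀ x, F x) x) h0
        have h2 : Mop b Φ W (φ : ∀ x, F x) x = 0 := by simpa [MopC_coe] using h1
        exact h2
      exact Subtype.ext hv
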